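/- Let (U, ρ) be a finite metric space and F ⊆ U with |F| = k a set of centers whose k-median cost satisfies cost(F) > 5·OPT, where OPT is the optimal k-median cost over all k-subsets of U. Then there exists a single swap (x, y) with x ∈ F, y ∈ U \ F such that cost(F − {x} + {y}) ≤ cost(F) − (cost(F) − 5·OPT)/k. -/

import Mathlib

open scoped BigOperators
open Finset

/-- A "derangement-like" permutation of `N` grouped by blocks of `c`: every element
whose block is at most half of `N` is moved to a different block. -/
lemma exists_block_perm {α β : Type} [DecidableEq α] [DecidableEq β]
    (N : Finset α) (c : α → β) :
    ∃ π : α → α, (∀ v ∈ N, π v ∈ N) ∧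
      (∀ h : α → ℝ, ∑ v ∈ N, h (π v) = ∑ v ∈ N, h v) ∧
      (∀ v ∈ N, 2 * (N.filter fun w => c w = c v).card ≤ N.card → c (π v) ≠ c v) := by
  classical
  set t : {x // x ∈ N} → Finset α := fun v =>
    if 2 * (N.filter fun w => c w = c (v : α)).card ≤ N.card
    then N.filter (fun w => ¬ c w = c (v : α)) else N with ht
  have htsub : ∀ v, t v ⊆ N := by
    intro v; rw [ht]; dsimp only; split
    · exact filter_subset _ _
    · exact Subset.rfl
  have hall : ∀ s : Finset {x // x ∈ N}, s.card ≤ (s.biUnion t).card := by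
    intro s
    rcases s.eq_empty_or_nonempty with rfl | hsne
    · simp
    have hcards : s.card ≤ N.card := by
      have := card_le_univ s
      simpa using this
    by_cases hbig : ∃ v ∈ s, ¬ (2 * (N.filter fun w => c w = c (v : α)).card ≤ N.card)
    · obtain ⟨v, hv, hb⟩ := hbig
      have : N ⊆ s.biUnion t := by
        intro w hw
        exact mem_biUnion.2 ⟨v, hv, by rw [ht]; dsimp only; rw [if_neg hb]; exact hw⟩
      exact hcards.trans (card_le_card this)
    push_neg at hbig
    by_cases hsame : ∀ v ∈ s, ∀ w ∈ s, c (v : α) = c (w : α)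
    · obtain ⟨v0, hv0⟩ := hsne
      have htv0 : t v0 = N.filter (fun w => ¬ c w = c (v0 : α)) := by
        rw [ht]; dsimp only; rw [if_pos (hbig v0 hv0)]
      have hsub : t v0 ⊆ s.biUnion t := subset_biUnion_of_mem t hv0
      refine le_trans ?_ (card_le_card hsub)
      rw [htv0]
      have h1 : s.card ≤ (N.filter fun w => c w = c (v0 : α)).card :=
        card_le_card_of_injOn (fun v => (v : α))
          (fun v hv => mem_filter.2 ⟨v.2, hsame v hv v0 hv0⟩)
          (fun a _ b _ h => Subtype.ext h)
      have h2 := Finset.card_filter_add_card_filter_not (s := N) (p := fun w => c w = c (v0 : α))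
      have h3 := hbig v0 hv0
      omega
    push_neg at hsame
    obtain ⟨v, hv, w, hw, hvw⟩ := hsame
    have : N ⊆ s.biUnion t := by
      intro x hx
      by_cases hcx : c x = c (v : α)
      · refine mem_biUnion.2 ⟨w, hw, ?_⟩
        rw [ht]; dsimp only; rw [if_pos (hbig w hw)]
        exact mem_filter.2 ⟨hx, by rw [hcx]; exact hvw⟩
      · refine mem_biUnion.2 ⟨v, hv, ?_⟩
        rw [ht]; dsimp only; rw [if_pos (hbig v hv)]
        exact mem_filter.2 ⟨hx, hcx⟩
    exact hcards.trans (card_le_card this)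
  obtain ⟨f, hfinj, hft⟩ := (Finset.all_card_le_biUnion_card_iff_exists_injective t).1 hall
  set π : α → α := fun a => if h : a ∈ N then f ⟨a, h⟩ else a with hπ
  have hmaps : ∀ v ∈ N, π v ∈ N := by
    intro v hv; rw [hπ]; dsimp only; rw [dif_pos hv]; exact htsub _ (hft ⟨v, hv⟩)
  have hinj : ∀ a ∈ N, ∀ b ∈ N, π a = π b → a = b := by
    intro a ha b hb h
    rw [hπ] at h; dsimp only at h; rw [dif_pos ha, dif_pos hb] at h
    exact Subtype.ext_iff.1 (hfinj h)
  have himg : N.image π = N := by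
    apply eq_of_subset_of_card_le
    · intro x hx; obtain ⟨a, ha, rfl⟩ := mem_image.1 hx; exact hmaps a ha
    · rw [card_image_of_injOn (fun a ha b hb => hinj a ha b hb)]
  refine ⟨π, hmaps, ?_, ?_⟩
  · intro h
    have hs : ∑ x ∈ N.image π, h x = ∑ a ∈ N, h (π a) := Finset.sum_image (fun a ha b hb => hinj a ha b hb)
    rw [himg] at hs
    exact hs.symm
  · intro v hv hsmall
    have := hft ⟨v, hv⟩
    rw [ht] at this; dsimp only at this; rw [if_pos hsmall] at this
    have := (mem_filter.1 this).2
    rw [hπ]; dsimp only; rw [dif_pos hv]; exact this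


/-- Assignment of swaps: each optimal center `g ∈ G` gets a center `s g ∈ F` that
captures nothing other than `g`, and each `f ∈ F` is used at most twice. -/
lemma exists_swap_assignment {α : Type} [DecidableEq α]
    (F G : Finset α) (hFG : F.card = G.card)
    (Cap : α → α → Prop) [∀ f g, Decidable (Cap f g)]
    (huniq : ∀ g ∈ G, ∀ f1 ∈ F, ∀ f2 ∈ F, Cap f1 g → Cap f2 g → f1 = f2) :
    ∃ s : α → α, (∀ g ∈ G, s g ∈ F) ∧
      (∀ g ∈ G, ∀ g' ∈ G, g' ≠ g → ¬ Cap (s g) g') ∧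
      (∀ f : α, (G.filter fun g => s g = f).card ≤ 2) := by
  classical
  set cap : α → Finset α := fun f => G.filter (fun g => Cap f g) with hcap
  set OK : α → Finset α := fun g => F.filter (fun f => ∀ g' ∈ G, g' ≠ g → ¬ Cap f g') with hOK
  set Good : Finset α := F.filter (fun f => cap f = ∅) with hGood
  set B1 : Finset α := F.filter (fun f => (cap f).card = 1) with hB1
  set B2 : Finset α := F.filter (fun f => 2 ≤ (cap f).card) with hB2
  -- each g has at most one capturer
  have hone : ∀ g ∈ G, (F.filter (fun f => Cap f g)).card ≤ 1 := by
    intro g hg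
    apply card_le_one.2
    intro f1 h1 f2 h2
    exact huniq g hg f1 (mem_filter.1 h1).1 f2 (mem_filter.1 h2).1
      (mem_filter.1 h1).2 (mem_filter.1 h2).2
  have hsum : ∑ f ∈ F, (cap f).card ≤ G.card := by
    have : ∀ f, (cap f).card = ∑ g ∈ G, if Cap f g then 1 else 0 := by
      intro f; rw [hcap]; exact card_filter _ _
    calc ∑ f ∈ F, (cap f).card = ∑ f ∈ F, ∑ g ∈ G, (if Cap f g then 1 else 0) := by
          simp only [this]
      _ = ∑ g ∈ G, ∑ f ∈ F, (if Cap f g then 1 else 0) := sum_comm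
      _ ≤ ∑ g ∈ G, 1 := by
          refine sum_le_sum (fun g hg => ?_)
          rw [← card_filter]
          exact hone g hg
      _ = G.card := by simp
  have hpart : F.card ≤ Good.card + B1.card + B2.card := by
    have hsub : F ⊆ (Good ∪ B1) ∪ B2 := by
      intro f hf
      rcases Nat.lt_or_ge (cap f).card 2 with h | h
      · interval_cases h' : (cap f).card
        · exact mem_union.2 (Or.inl (mem_union.2 (Or.inl
            (mem_filter.2 ⟨hf, card_eq_zero.1 h'⟩))))
        · exact mem_union.2 (Or.inl (mem_union.2 (Or.inr (mem_filter.2 ⟨hf, h'⟩))))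
      · exact mem_union.2 (Or.inr (mem_filter.2 ⟨hf, h⟩))
    calc F.card ≤ ((Good ∪ B1) ∪ B2).card := card_le_card hsub
      _ ≤ (Good ∪ B1).card + B2.card := card_union_le _ _
      _ ≤ Good.card + B1.card + B2.card := by
          have := card_union_le Good B1; omega
  have hB12 : B1.card + 2 * B2.card ≤ ∑ f ∈ F, (cap f).card := by
    have hdisj : Disjoint B1 B2 := by
      rw [disjoint_left]
      intro f h1 h2
      have := (mem_filter.1 h1).2
      have := (mem_filter.1 h2).2
      omega
    have hsub : B1 ∪ B2 ⊆ F := union_subset (filter_subset _ _) (filter_subset _ _)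
    calc B1.card + 2 * B2.card
        = ∑ f ∈ B1, 1 + ∑ f ∈ B2, 2 := by
          rw [sum_const, sum_const]; simp [mul_comm]
      _ ≤ ∑ f ∈ B1, (cap f).card + ∑ f ∈ B2, (cap f).card := by
          gcongr with f hf f hf
          · have := (mem_filter.1 hf).2; omega
          · exact (mem_filter.1 hf).2
      _ = ∑ f ∈ B1 ∪ B2, (cap f).card := (sum_union hdisj).symm
      _ ≤ ∑ f ∈ F, (cap f).card := sum_le_sum_of_subset hsub
  have hkey : G.card ≤ 2 * Good.card + B1.card := by omega
  -- Hall's condition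
  set t : {x // x ∈ G} → Finset (α × Fin 2) := fun g => (OK (g : α)) ×ˢ (univ : Finset (Fin 2))
    with htdef
  have hOKsubF : ∀ g : α, OK g ⊆ F := fun g => filter_subset _ _
  -- the map χ sending a B1 center to its captured element
  set χ : α → α := fun f => if h : (cap f).Nonempty then h.choose else f with hχ
  set D : Finset α := G.filter (fun g => ∃ f ∈ B1, Cap f g) with hD
  have hB1D : B1.card ≤ D.card := by
    apply card_le_card_of_injOn χ
    · intro f hf
      have hf1 := (mem_filter.1 hf).2
      have hne : (cap f).Nonempty := card_pos.1 (by omega)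
      have hmem : χ f ∈ cap f := by rw [hχ]; dsimp only; rw [dif_pos hne]; exact hne.choose_spec
      have := mem_filter.1 hmem
      exact mem_filter.2 ⟨this.1, f, hf, this.2⟩
    · intro f1 hf1 f2 hf2 heq
      have h1 := (mem_filter.1 hf1).2
      have h2 := (mem_filter.1 hf2).2
      have hne1 : (cap f1).Nonempty := card_pos.1 (by omega)
      have hne2 : (cap f2).Nonempty := card_pos.1 (by omega)
      have hm1 : χ f1 ∈ cap f1 := by rw [hχ]; dsimp only; rw [dif_pos hne1]; exact hne1.choose_spec
      have hm2 : χ f2 ∈ cap f2 := by rw [hχ]; dsimp only; rw [dif_pos hne2]; exact hne2.choose_spec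
      rw [heq] at hm1
      have hg1 := mem_filter.1 hm1
      have hg2 := mem_filter.1 hm2
      exact huniq _ hg2.1 f1 (mem_of_mem_filter _ hf1) f2 (mem_of_mem_filter _ hf2) hg1.2 hg2.2
  have hall : ∀ S : Finset {x // x ∈ G}, S.card ≤ (S.biUnion t).card := by
    intro S
    rcases S.eq_empty_or_nonempty with rfl | hSne
    · simp
    set W : Finset α := S.biUnion (fun g => OK (g : α)) with hW
    have hWt : W ×ˢ (univ : Finset (Fin 2)) ⊆ S.biUnion t := by
      intro p hp
      have := mem_product.1 hp
      obtain ⟨g, hg, hOKg⟩ := mem_biUnion.1 this.1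
      exact mem_biUnion.2 ⟨g, hg, mem_product.2 ⟨hOKg, mem_univ _⟩⟩
    have hcard2 : 2 * W.card ≤ (S.biUnion t).card := by
      have := card_le_card hWt
      rw [card_product] at this
      simpa [mul_comm] using this
    suffices h : S.card ≤ 2 * W.card by omega
    -- Good ⊆ W
    have hGoodW : Good ⊆ W := by
      intro f hf
      obtain ⟨g0, hg0⟩ := hSne
      refine mem_biUnion.2 ⟨g0, hg0, mem_filter.2 ⟨(mem_filter.1 hf).1, ?_⟩⟩
      intro g' hg' _ hCap
      have : g' ∈ cap f := mem_filter.2 ⟨hg', hCap⟩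
      rw [(mem_filter.1 hf).2] at this
      exact notMem_empty _ this
    set ψ : {x // x ∈ G} → α := fun g =>
      if h : ∃ f, f ∈ B1 ∧ Cap f (g : α) then h.choose else (g : α) with hψ
    set SB1 : Finset {x // x ∈ G} := S.filter (fun g => ∃ f ∈ B1, Cap f (g : α)) with hSB1
    have hψspec : ∀ g ∈ SB1, ψ g ∈ B1 ∧ Cap (ψ g) (g : α) := by
      intro g hg
      have hex : ∃ f, f ∈ B1 ∧ Cap f (g : α) := by
        obtain ⟨f, hf1, hf2⟩ := (mem_filter.1 hg).2
        exact ⟨f, hf1, hf2⟩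
      rw [hψ]; dsimp only; rw [dif_pos hex]
      exact hex.choose_spec
    have hcapsing : ∀ g ∈ SB1, cap (ψ g) = {(g : α)} := by
      intro g hg
      obtain ⟨hB, hC⟩ := hψspec g hg
      have hcard1 : (cap (ψ g)).card = 1 := (mem_filter.1 hB).2
      obtain ⟨a, ha⟩ := card_eq_one.1 hcard1
      have : (g : α) ∈ cap (ψ g) := mem_filter.2 ⟨g.2, hC⟩
      rw [ha] at this ⊢
      rw [mem_singleton.1 this]
    have hψmaps : ∀ g ∈ SB1, ψ g ∈ W \ Good := by
      intro g hg
      obtain ⟨hB, hC⟩ := hψspec g hg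
      have hsing := hcapsing g hg
      refine mem_sdiff.2 ⟨?_, ?_⟩
      · refine mem_biUnion.2 ⟨g, (mem_filter.1 hg).1, mem_filter.2 ⟨mem_of_mem_filter _ hB, ?_⟩⟩
        intro g' hg' hne hCap
        have : g' ∈ cap (ψ g) := mem_filter.2 ⟨hg', hCap⟩
        rw [hsing] at this
        exact hne (mem_singleton.1 this)
      · intro hGood'
        have := (mem_filter.1 hGood').2
        rw [hsing] at this
        simp at this
    have hψinj : Set.InjOn ψ SB1 := by
      intro g1 hg1 g2 hg2 heq
      have h1 := hcapsing g1 hg1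
      have h2 := hcapsing g2 hg2
      rw [heq] at h1
      rw [h1] at h2
      exact Subtype.ext (singleton_injective h2)
    have hSB1card : SB1.card ≤ (W \ Good).card :=
      card_le_card_of_injOn ψ hψmaps hψinj
    have hGoodWcard : Good.card + SB1.card ≤ W.card := by
      have := card_sdiff_of_subset hGoodW
      have := card_le_card hGoodW
      omega
    have hrest : (S.filter (fun g : {x // x ∈ G} => ¬ ∃ f ∈ B1, Cap f (g : α))).card ≤ G.card - D.card := by
      have : (S.filter (fun g : {x // x ∈ G} => ¬ ∃ f ∈ B1, Cap f (g : α))).card ≤ (G \ D).card := by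
        apply card_le_card_of_injOn (fun g : {x // x ∈ G} => (g : α))
        · intro g hg
          have := mem_filter.1 hg
          exact mem_sdiff.2 ⟨g.2, fun hD' => this.2 (mem_filter.1 hD').2⟩
        · intro a _ b _ h; exact Subtype.ext h
      rwa [card_sdiff_of_subset (filter_subset _ _)] at this
    have hDG : D.card ≤ G.card := card_le_card (filter_subset _ _)
    have hsplit := Finset.card_filter_add_card_filter_not (s := S) (p := fun g => ∃ f ∈ B1, Cap f (g : α))
    rw [← hSB1] at hsplit
    omega
  obtain ⟨σ, hσinj, hσt⟩ := (Finset.all_card_le_biUnion_card_iff_exists_injective t).1 hall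
  set s : α → α := fun g => if h : g ∈ G then (σ ⟨g, h⟩).1 else g with hs
  have hsOK : ∀ g (h : g ∈ G), s g ∈ OK g := by
    intro g h
    have := hσt ⟨g, h⟩
    rw [htdef] at this
    have := (mem_product.1 this).1
    rw [hs]; dsimp only; rw [dif_pos h]; exact this
  refine ⟨s, ?_, ?_, ?_⟩
  · intro g hg; exact hOKsubF g (hsOK g hg)
  · intro g hg g' hg' hne
    exact (mem_filter.1 (hsOK g hg)).2 g' hg' hne
  · intro f
    have : (G.filter fun g => s g = f).card ≤ (univ : Finset (Fin 2)).card := by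
      apply card_le_card_of_injOn (fun g => if h : g ∈ G then (σ ⟨g, h⟩).2 else 0)
      · intro g _; exact mem_univ _
      · intro g1 hg1 g2 hg2 heq
        have hm1 := mem_filter.1 hg1
        have hm2 := mem_filter.1 hg2
        have hG1 := hm1.1
        have hG2 := hm2.1
        dsimp only at heq
        rw [dif_pos hG1, dif_pos hG2] at heq
        have hs1 : (σ ⟨g1, hG1⟩).1 = f := by
          have := hm1.2; rw [hs] at this; dsimp only at this; rwa [dif_pos hG1] at this
        have hs2 : (σ ⟨g2, hG2⟩).1 = f := by
          have := hm2.2; rw [hs] at this; dsimp only at this; rwa [dif_pos hG2] at this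
        have : σ ⟨g1, hG1⟩ = σ ⟨g2, hG2⟩ := Prod.ext (hs1.trans hs2.symm) heq
        have := hσinj this
        exact Subtype.ext_iff.1 this
    simpa using this


open Finset


/-- Local search improvement lemma (Arya et al.): in a finite metric space, for
any center set `F` of size `k` with `cost(F) > 5·OPT`, there is a single swap
`(x, y)`, `x ∈ F`, `y ∉ F`, with
`cost(F - {x} + {y}) ≤ cost(F) - (cost(F) - 5·OPT)/k`. -/
theorem local_search_swap_improvement {U : Type} [Fintype U] [DecidableEq U] [MetricSpace U]
    (k : ℕ) (hk : 0 < k) (F : Finset U) (hF : F.Nonempty) (hcard : F.card = k)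
    (OPT : ℝ)
    (hOPT : OPT = sInf {r : ℝ | ∃ (G : Finset U) (hG : G.Nonempty),
      G.card = k ∧ r = ∑ v : U, G.inf' hG fun f => dist v f})
    (hcost : 5 * OPT < ∑ v : U, F.inf' hF fun f => dist v f) :
    ∃ x ∈ F, ∃ y ∉ F, ∀ h' : (insert y (F.erase x)).Nonempty,
      ∑ v : U, (insert y (F.erase x)).inf' h' (fun f => dist v f)
        ≤ (∑ v : U, F.inf' hF fun f => dist v f)
          - ((∑ v : U, F.inf' hF fun f => dist v f) - 5 * OPT) / k := by
  classical
  -- the optimum is attained by some `G`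
  have hsetne : ({r : ℝ | ∃ (G : Finset U) (hG : G.Nonempty),
      G.card = k ∧ r = ∑ v : U, G.inf' hG fun f => dist v f}).Nonempty :=
    ⟨_, F, hF, hcard, rfl⟩
  have hsetfin : ({r : ℝ | ∃ (G : Finset U) (hG : G.Nonempty),
      G.card = k ∧ r = ∑ v : U, G.inf' hG fun f => dist v f}).Finite := by
    apply Set.Finite.subset (Set.finite_range (fun G : Finset U =>
      if hG : G.Nonempty then ∑ v : U, G.inf' hG (fun f => dist v f) else 0))
    rintro r ⟨G, hG, hGcard, rfl⟩
    exact ⟨G, by dsimp only; rw [dif_pos hG]⟩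
  have hmem := hsetne.csInf_mem hsetfin
  rw [← hOPT] at hmem
  obtain ⟨G, hGne, hGcard, hGval⟩ := hmem
  -- notation
  set dF : U → ℝ := fun v => F.inf' hF fun f => dist v f with hdF
  set dG : U → ℝ := fun v => G.inf' hGne fun f => dist v f with hdG
  set costF : ℝ := ∑ v : U, dF v with hcostF
  set costG : ℝ := ∑ v : U, dG v with hcostG
  have hcostG_OPT : costG = OPT := hGval.symm
  have hcost' : 5 * costG < costF := by rw [hcostG_OPT]; exact hcost
  -- nearest centers
  have hfFex : ∀ v : U, ∃ f, f ∈ F ∧ dF v = dist v f := fun v => F.exists_mem_eq_inf' hF _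
  set fF : U → U := fun v => (hfFex v).choose with hfFdef
  have hfFmem : ∀ v, fF v ∈ F := fun v => (hfFex v).choose_spec.1
  have hfFval : ∀ v, dF v = dist v (fF v) := fun v => (hfFex v).choose_spec.2
  have hgGex : ∀ v : U, ∃ g, g ∈ G ∧ dG v = dist v g := fun v => G.exists_mem_eq_inf' hGne _
  set gG : U → U := fun v => (hgGex v).choose with hgGdef
  have hgGmem : ∀ v, gG v ∈ G := fun v => (hgGex v).choose_spec.1
  have hgGval : ∀ v, dG v = dist v (gG v) := fun v => (hgGex v).choose_spec.2
  -- clusters and capture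
  set Cl : U → Finset U := fun g => univ.filter (fun v => gG v = g) with hCl
  set Cap : U → U → Prop :=
    fun f g => (Cl g).card < 2 * ((Cl g).filter (fun w => fF w = f)).card with hCap
  have huniq : ∀ g ∈ G, ∀ f1 ∈ F, ∀ f2 ∈ F, Cap f1 g → Cap f2 g → f1 = f2 := by
    intro g _ f1 _ f2 _ h1 h2
    by_contra hne
    rw [hCap] at h1 h2
    have hdisj : Disjoint ((Cl g).filter (fun w => fF w = f1))
        ((Cl g).filter (fun w => fF w = f2)) := by
      rw [disjoint_left]
      intro w hw1 hw2
      exact hne (((mem_filter.1 hw1).2).symm.trans ((mem_filter.1 hw2).2))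
    have hsub : (Cl g).filter (fun w => fF w = f1) ∪ (Cl g).filter (fun w => fF w = f2)
        ⊆ Cl g := union_subset (filter_subset _ _) (filter_subset _ _)
    have hc := card_le_card hsub
    rw [card_union_of_disjoint hdisj] at hc
    omega
  -- the swap assignment
  obtain ⟨s, hsF, hsnocap, hsmult⟩ :=
    exists_swap_assignment F G (by rw [hcard, hGcard]) Cap huniq
  -- the block permutations
  have hπex : ∀ g : U, ∃ π : U → U, (∀ v ∈ Cl g, π v ∈ Cl g) ∧
      (∀ h : U → ℝ, ∑ v ∈ Cl g, h (π v) = ∑ v ∈ Cl g, h v) ∧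
      (∀ v ∈ Cl g, 2 * ((Cl g).filter fun w => fF w = fF v).card ≤ (Cl g).card →
        fF (π v) ≠ fF v) := fun g => exists_block_perm (Cl g) fF
  set π : U → U → U := fun g => (hπex g).choose with hπdef
  have hπmaps : ∀ g, ∀ v ∈ Cl g, π g v ∈ Cl g := fun g => (hπex g).choose_spec.1
  have hπsum : ∀ g, ∀ h : U → ℝ, ∑ v ∈ Cl g, h (π g v) = ∑ v ∈ Cl g, h v :=
    fun g => (hπex g).choose_spec.2.1
  have hπblock : ∀ g, ∀ v ∈ Cl g,
      2 * ((Cl g).filter fun w => fF w = fF v).card ≤ (Cl g).card → fF (π g v) ≠ fF v :=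
    fun g => (hπex g).choose_spec.2.2
  set NX : U → U := fun v => π (gG v) v with hNX
  have hvCl : ∀ v, v ∈ Cl (gG v) := fun v => mem_filter.2 ⟨mem_univ v, rfl⟩
  have hNXCl : ∀ v, NX v ∈ Cl (gG v) := fun v => hπmaps _ _ (hvCl v)
  have hgGNX : ∀ v, gG (NX v) = gG v := fun v => (mem_filter.1 (hNXCl v)).2
  -- the key quantity
  set T : U → ℝ := fun v => dG v + dG (NX v) + dF (NX v) - dF v with hT
  have htri : ∀ v, dist v (fF (NX v)) ≤ dG v + dG (NX v) + dF (NX v) := by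
    intro v
    have h1 : dist v (fF (NX v)) ≤ dist v (NX v) + dist (NX v) (fF (NX v)) :=
      dist_triangle _ _ _
    have h2 : dist v (NX v) ≤ dist v (gG v) + dist (gG v) (NX v) := dist_triangle _ _ _
    have h3 : dist (gG v) (NX v) = dG (NX v) := by
      rw [dist_comm, hgGval (NX v), hgGNX v]
    have h4 : dist (NX v) (fF (NX v)) = dF (NX v) := (hfFval (NX v)).symm
    have h5 : dist v (gG v) = dG v := (hgGval v).symm
    linarith
  have hTnonneg : ∀ v, 0 ≤ T v := by
    intro v
    have h1 : dF v ≤ dist v (fF (NX v)) := inf'_le _ (hfFmem (NX v))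
    have := htri v
    rw [hT]; dsimp only
    linarith
  -- per-swap bound
  set swset : U → Finset U := fun g => insert g (F.erase (s g)) with hswset
  have hswne : ∀ g, (swset g).Nonempty := fun g => ⟨g, mem_insert_self _ _⟩
  set swcost : U → ℝ := fun g => ∑ v : U, (swset g).inf' (hswne g) (fun f => dist v f)
    with hswcost
  set A : U → ℝ := fun g => ∑ v ∈ univ.filter (fun v => gG v = g), (dG v - dF v) with hA
  set B : U → ℝ := fun f => ∑ v ∈ univ.filter (fun v => fF v = f), T v with hB
  have hswap : ∀ g ∈ G, swcost g ≤ costF + A g + B (s g) := by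
    intro g hg
    have hpoint : ∀ v : U, (swset g).inf' (hswne g) (fun f => dist v f) ≤
        dF v + (if gG v = g then dG v - dF v else 0) + (if fF v = s g then T v else 0) := by
      intro v
      by_cases hvg : gG v = g
      · have h1 : (swset g).inf' (hswne g) (fun f => dist v f) ≤ dist v g :=
          inf'_le _ (mem_insert_self _ _)
        have h2 : dist v g = dG v := by rw [← hvg, ← hgGval]
        rw [if_pos hvg]
        split_ifs with h3
        · have := hTnonneg v; linarith
        · linarith
      · rw [if_neg hvg]
        by_cases hvf : fF v = s g
        · -- reassign to fF (NX v)
          have hnocap : ¬ Cap (s g) (gG v) := hsnocap g hg (gG v) (hgGmem v) hvg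
          rw [hCap] at hnocap
          dsimp only at hnocap
          push_neg at hnocap
          have hsmall : 2 * ((Cl (gG v)).filter fun w => fF w = fF v).card
              ≤ (Cl (gG v)).card := by rw [hvf]; exact hnocap
          have hne := hπblock (gG v) v (hvCl v) hsmall
          have hmem' : fF (NX v) ∈ swset g := by
            rw [hswset]; dsimp only
            refine mem_insert_of_mem (mem_erase.2 ⟨?_, hfFmem (NX v)⟩)
            rw [← hvf]; exact hne
          have h1 : (swset g).inf' (hswne g) (fun f => dist v f) ≤ dist v (fF (NX v)) :=
            inf'_le _ hmem'
          have h2 := htri v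
          rw [if_pos hvf, hT]; dsimp only
          linarith
        · have hmem' : fF v ∈ swset g := by
            rw [hswset]; dsimp only
            exact mem_insert_of_mem (mem_erase.2 ⟨hvf, hfFmem v⟩)
          have h1 : (swset g).inf' (hswne g) (fun f => dist v f) ≤ dist v (fF v) :=
            inf'_le _ hmem'
          rw [if_neg hvf]
          linarith [hfFval v]
    calc swcost g ≤ ∑ v : U, (dF v + (if gG v = g then dG v - dF v else 0)
          + (if fF v = s g then T v else 0)) := sum_le_sum (fun v _ => hpoint v)
      _ = costF + A g + B (s g) := by
          rw [sum_add_distrib, sum_add_distrib, hA, hB]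
          dsimp only
          rw [sum_filter, sum_filter]
  -- summing the per-swap bounds
  have hsumA : ∑ g ∈ G, A g = costG - costF := by
    rw [hA]
    dsimp only
    rw [sum_fiberwise_of_maps_to (fun v _ => hgGmem v) (fun v => dG v - dF v)]
    rw [hcostF, hcostG, ← sum_sub_distrib]
  have hBnonneg : ∀ f, 0 ≤ B f := by
    intro f; rw [hB]; dsimp only
    exact sum_nonneg (fun v _ => hTnonneg v)
  have hsumT : ∑ v : U, T v = 2 * costG := by
    have hmid : ∑ v : U, (dG (NX v) + dF (NX v)) = ∑ v : U, (dG v + dF v) := by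
      rw [← sum_fiberwise_of_maps_to (fun v _ => hgGmem v) (fun v => dG (NX v) + dF (NX v)),
        ← sum_fiberwise_of_maps_to (fun v _ => hgGmem v) (fun v => dG v + dF v)]
      refine sum_congr rfl (fun g hg => ?_)
      have : ∀ v ∈ univ.filter (fun v => gG v = g), dG (NX v) + dF (NX v)
          = dG (π g v) + dF (π g v) := by
        intro v hv
        have : gG v = g := (mem_filter.1 hv).2
        rw [hNX]; dsimp only; rw [this]
      rw [sum_congr rfl this]
      exact hπsum g (fun w => dG w + dF w)
    have hexp : ∑ v : U, T v = ∑ v : U, dG v + ∑ v : U, (dG (NX v) + dF (NX v))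
        - ∑ v : U, dF v := by
      rw [hT]; dsimp only
      rw [← sum_add_distrib, ← sum_sub_distrib]
      refine sum_congr rfl (fun v _ => by ring)
    rw [hexp, hmid, sum_add_distrib, ← hcostF, ← hcostG]
    ring
  have hsumB : ∑ g ∈ G, B (s g) ≤ 4 * costG := by
    have h1 : ∑ g ∈ G, B (s g) = ∑ f ∈ F, ∑ g ∈ G.filter (fun g => s g = f), B (s g) :=
      (sum_fiberwise_of_maps_to (fun g hg => hsF g hg) (fun g => B (s g))).symm
    have h2 : ∀ f ∈ F, (∑ g ∈ G.filter (fun g => s g = f), B (s g)) ≤ 2 * B f := by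
      intro f _
      have heq : (∑ g ∈ G.filter (fun g => s g = f), B (s g))
          = (G.filter (fun g => s g = f)).card * B f := by
        rw [sum_congr rfl (fun g hg => by rw [(mem_filter.1 hg).2])]
        rw [sum_const, nsmul_eq_mul]
      rw [heq]
      refine mul_le_mul_of_nonneg_right ?_ (hBnonneg f)
      exact_mod_cast hsmult f
    have h3 : ∑ f ∈ F, 2 * B f = 2 * (∑ v : U, T v) := by
      rw [← mul_sum]
      congr 1
      rw [hB]; dsimp only
      exact sum_fiberwise_of_maps_to (fun v _ => hfFmem v) T
    calc ∑ g ∈ G, B (s g) = ∑ f ∈ F, (∑ g ∈ G.filter (fun g => s g = f), B (s g)) := h1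
      _ ≤ ∑ f ∈ F, 2 * B f := sum_le_sum h2
      _ = 2 * (∑ v : U, T v) := h3
      _ = 4 * costG := by rw [hsumT]; ring
  -- total bound and averaging
  have htotal : ∑ g ∈ G, swcost g ≤ ∑ g ∈ G, (costF + (5 * costG - costF) / k) := by
    have h1 : ∑ g ∈ G, swcost g ≤ ∑ g ∈ G, (costF + A g + B (s g)) := sum_le_sum hswap
    have h2 : ∑ g ∈ G, (costF + A g + B (s g))
        = G.card * costF + (∑ g ∈ G, A g) + (∑ g ∈ G, B (s g)) := by
      rw [sum_add_distrib, sum_add_distrib, sum_const, nsmul_eq_mul]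
    have h3 : ∑ g ∈ G, (costF + (5 * costG - costF) / k)
        = G.card * costF + G.card * ((5 * costG - costF) / k) := by
      rw [sum_const, nsmul_eq_mul]; ring
    have hkne : (k : ℝ) ≠ 0 := Nat.cast_ne_zero.2 hk.ne'
    have h4 : (G.card : ℝ) = (k : ℝ) := by exact_mod_cast congrArg Nat.cast hGcard
    rw [h3, h4]
    have h5 : (k : ℝ) * ((5 * costG - costF) / k) = 5 * costG - costF := by
      field_simp
    rw [h5]
    calc ∑ g ∈ G, swcost g ≤ G.card * costF + (∑ g ∈ G, A g) + (∑ g ∈ G, B (s g)) := by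
          rw [← h2]; exact h1
      _ ≤ G.card * costF + (costG - costF) + 4 * costG := by
          rw [hsumA]; linarith [hsumB]
      _ = (k : ℝ) * costF + (5 * costG - costF) := by rw [h4]; ring
  obtain ⟨g0, hg0G, hg0le⟩ := exists_le_of_sum_le hGne htotal
  -- the chosen swap
  have hkpos : (0 : ℝ) < k := Nat.cast_pos.2 hk
  have hbound : swcost g0 ≤ costF - (costF - 5 * OPT) / k := by
    have : costF + (5 * costG - costF) / k = costF - (costF - 5 * costG) / k := by ring
    rw [this, hcostG_OPT] at hg0le
    exact hg0le
  have hlt : costF - (costF - 5 * OPT) / k < costF := by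
    have : 0 < (costF - 5 * OPT) / k := div_pos (by rw [← hcostG_OPT]; linarith) hkpos
    linarith
  have hg0F : g0 ∉ F := by
    intro hg0F
    have hsub : swset g0 ⊆ F := by
      rw [hswset]; dsimp only
      exact insert_subset hg0F (erase_subset _ _ |>.trans Subset.rfl)
    have hge : costF ≤ swcost g0 := by
      rw [hcostF, hswcost]; dsimp only
      refine sum_le_sum (fun v _ => ?_)
      refine le_inf' (hswne g0) _ (fun b hb => inf'_le _ (hsub hb))
    linarith
  refine ⟨s g0, hsF g0 hg0G, g0, hg0F, fun h' => ?_⟩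
  exact hbound
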